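/- Let T be a non-abelian finite simple group, k ≥ 1, ℓ ≥ 2, and let H ≤ Hol(T^k) = T^k ⋊ Aut(T^k) be a permutation group on Γ = T^k (via the holomorph action) having two minimal normal subgroups M₁ ≅ N₁ ≅ T^k (the left and right regular copies). Let δ : H → H^ℓ be the diagonal embedding and set G = M₁^ℓ · (Hδ × Sym(ℓ)) ≤ H wr Sym(ℓ) acting in product action on Ω = Γ^ℓ. Then M₁^ℓ is a regular normal subgroup of G, N₁δ = {(n,...,n) : n ∈ N₁} is a semiregular intransitive minimal normal subgroup of G, and consequently G is innately transitive (has a transitive minimal normal subgroup, namely M₁^ℓ) but not quasiprimitive. -/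

import Mathlib

open scoped Pointwise

namespace QP

variable {Ω : Type*}

/-- `P` is a partition of `Ω`. -/
def IsPartition (P : Set (Set Ω)) : Prop :=
  ∅ ∉ P ∧ ∀ ω : Ω, ∃! b : Set Ω, b ∈ P ∧ ω ∈ b

/-- A proper partition: neither `{Ω}` nor the partition into singletons. -/
def IsProperPartition (P : Set (Set Ω)) : Prop :=
  IsPartition P ∧ P ≠ {Set.univ} ∧ ¬ ∀ b ∈ P, ∃ ω : Ω, b = {ω}

/-- The pointwise stabiliser of the partition `P` (kernel of the action on `P`),
as a subgroup of `Sym(Ω)`: the permutations fixing every block of `P` setwise. -/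
def partKernel (P : Set (Set Ω)) : Subgroup (Equiv.Perm Ω) where
  carrier := {g | ∀ b ∈ P, g • b = b}
  one_mem' := by intro b hb; simp
  mul_mem' := by
    intro g h hg hh b hb
    rw [mul_smul, hh b hb, hg b hb]
  inv_mem' := by
    intro g hg b hb
    rw [inv_smul_eq_iff, hg b hb]

/-- The setwise stabiliser of a partition `P` in `Sym(Ω)`. -/
def partStab (P : Set (Set Ω)) : Subgroup (Equiv.Perm Ω) :=
  MulAction.stabilizer (Equiv.Perm Ω) P

/-- The permutation of the set of blocks of `P` induced by an element of
the stabiliser of `P`. -/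
noncomputable def blockPerm (P : Set (Set Ω)) (g : ↥(partStab P)) : Equiv.Perm ↥P where
  toFun b := ⟨(g : Equiv.Perm Ω) • (b : Set Ω), by
    have h1 : (g : Equiv.Perm Ω) • (b : Set Ω) ∈ (g : Equiv.Perm Ω) • P :=
      Set.smul_mem_smul_set b.2
    rwa [g.2] at h1⟩
  invFun b := ⟨(g : Equiv.Perm Ω)⁻¹ • (b : Set Ω), by
    have h0 : (g : Equiv.Perm Ω) • P = P := g.2
    have h2 : ((g : Equiv.Perm Ω)⁻¹) • P = P := by
      rw [inv_smul_eq_iff, h0]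
    have h1 : (g : Equiv.Perm Ω)⁻¹ • (b : Set Ω) ∈ (g : Equiv.Perm Ω)⁻¹ • P :=
      Set.smul_mem_smul_set b.2
    rwa [h2] at h1⟩
  left_inv b := by
    apply Subtype.ext
    simp
  right_inv b := by
    apply Subtype.ext
    simp

/-- The homomorphism from the stabiliser of a partition `P` to the symmetric
group on the set of blocks of `P`. -/
noncomputable def componentHom (P : Set (Set Ω)) : ↥(partStab P) →* Equiv.Perm ↥P where
  toFun := blockPerm P
  map_one' := by
    apply Equiv.ext; intro b
    apply Subtype.ext
    simp [blockPerm]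
  map_mul' := by
    intro g h
    apply Equiv.ext; intro b
    apply Subtype.ext
    simp [blockPerm, mul_smul]

/-- The component `G^P` of `G` on a partition `P` : the permutation group
induced on the set of blocks of `P` by the setwise stabiliser of `P` in `G`. -/
noncomputable def component (G : Subgroup (Equiv.Perm Ω)) (P : Set (Set Ω)) :
    Subgroup (Equiv.Perm ↥P) :=
  Subgroup.map (componentHom P) (G.subgroupOf (partStab P))

section abstr
variable {X : Type*} [Group X]

/-- `N` is a normal subgroup of the (sub)group `G`. -/
def IsNormalIn (N G : Subgroup X) : Prop :=
  N ≤ G ∧ ∀ g ∈ G, ∀ n ∈ N, g * n * g⁻¹ ∈ N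

/-- `N` is a minimal normal subgroup of `G`. -/
def IsMinimalNormalIn (N G : Subgroup X) : Prop :=
  IsNormalIn N G ∧ N ≠ ⊥ ∧
    ∀ K : Subgroup X, IsNormalIn K G → K ≠ ⊥ → K ≤ N → K = N

/-- The socle of `G`: the subgroup generated by all minimal normal subgroups. -/
def socle (G : Subgroup X) : Subgroup X :=
  ⨆ N ∈ {N : Subgroup X | IsMinimalNormalIn N G}, N

/-- `M` is the internal direct product of the family `N` of subgroups. -/
def IsInternalDirectProductOver {ι : Type*} (M : Subgroup X) (N : ι → Subgroup X) : Prop :=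
  (∀ i, N i ≤ M) ∧
  (∀ i j, i ≠ j → ∀ x ∈ N i, ∀ y ∈ N j, Commute x y) ∧
  (⨆ i, N i) = M ∧
  (∀ i, N i ⊓ (⨆ j ∈ ({i}ᶜ : Set ι), N j) = ⊥)

end abstr

/-- A transitive permutation group on `α`. -/
def IsTransitivePerm {α : Type*} (H : Subgroup (Equiv.Perm α)) : Prop :=
  ∀ a b : α, ∃ g ∈ H, g a = b

/-- A regular permutation group: transitive with trivial point stabilisers. -/
def IsRegularPerm {α : Type*} (H : Subgroup (Equiv.Perm α)) : Prop :=
  IsTransitivePerm H ∧ ∀ g ∈ H, ∀ a : α, g a = a → g = 1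

/-- A semiregular permutation group: all point stabilisers are trivial. -/
def IsSemiregularPerm {α : Type*} (H : Subgroup (Equiv.Perm α)) : Prop :=
  ∀ g ∈ H, ∀ a : α, g a = a → g = 1

/-- A quasiprimitive permutation group: transitive, and every nontrivial
normal subgroup is transitive. -/
def IsQuasiprimitivePerm {α : Type*} (H : Subgroup (Equiv.Perm α)) : Prop :=
  IsTransitivePerm H ∧
    ∀ N : Subgroup (Equiv.Perm α), IsNormalIn N H → N ≠ ⊥ → IsTransitivePerm N

section indexed

variable {ι : Type*}

/-- A Cartesian decomposition, indexed form: a family of pairwise distinct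
proper partitions such that any choice of blocks, one from each partition,
intersects in exactly one point. -/
def IsCartesianDecomp (Γ : ι → Set (Set Ω)) : Prop :=
  (∀ i, IsProperPartition (Γ i)) ∧ Function.Injective Γ ∧
  ∀ c : ι → Set Ω, (∀ i, c i ∈ Γ i) → ∃! ω : Ω, ∀ i, ω ∈ c i

/-- The Cartesian decomposition `Γ` is `M`-normal, with `N i` playing the
role of `M^{Γ i}`: each partition is `M`-invariant, `M` is the internal direct
product of the `N i`, each `N i` acts faithfully on `Γ i`, and
`∏_{j ≠ i} N j` is the kernel of the `M`-action on `Γ i`. -/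
structure IsNormalDecomp (M : Subgroup (Equiv.Perm Ω)) (Γ : ι → Set (Set Ω))
    (N : ι → Subgroup (Equiv.Perm Ω)) : Prop where
  invariant : ∀ i, ∀ g ∈ M, ∀ b ∈ Γ i, g • b ∈ Γ i
  product : IsInternalDirectProductOver M N
  faithful : ∀ i, N i ⊓ partKernel (Γ i) = ⊥
  kernel : ∀ i, M ⊓ partKernel (Γ i) = ⨆ j ∈ ({i}ᶜ : Set ι), N j

end indexed

section setbased

/-- A Cartesian decomposition, as a (finite) set of proper partitions. -/
def IsCartesianDecompSet (E : Set (Set (Set Ω))) : Prop :=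
  E.Finite ∧ (∀ P ∈ E, IsProperPartition P) ∧
  ∀ c : Set (Set Ω) → Set Ω, (∀ P ∈ E, c P ∈ P) → ∃! ω : Ω, ∀ P ∈ E, ω ∈ c P

/-- `E` is a homogeneous Cartesian decomposition: all partitions have the same size. -/
def IsHomogeneous (E : Set (Set (Set Ω))) : Prop :=
  ∀ P ∈ E, ∀ Q ∈ E, Nat.card ↥P = Nat.card ↥Q

/-- `E` is invariant under `G`: `G` permutes the partitions in `E`. -/
def InvariantDec (G : Subgroup (Equiv.Perm Ω)) (E : Set (Set (Set Ω))) : Prop :=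
  ∀ g ∈ G, ∀ P ∈ E, g • P ∈ E

/-- `G` is transitive on `E`. -/
def TransitiveOnDec (G : Subgroup (Equiv.Perm Ω)) (E : Set (Set (Set Ω))) : Prop :=
  ∀ P ∈ E, ∀ Q ∈ E, ∃ g ∈ G, g • P = Q

/-- The Cartesian decomposition `E` is `M`-normal: `M` fixes each partition
in `E` setwise, and `M` is the internal direct product of subgroups `N P`
(`P ∈ E`), where `∏_{Q ≠ P} N Q` is the kernel of the `M`-action on `P`. -/
def IsNormalDecompSet (M : Subgroup (Equiv.Perm Ω)) (E : Set (Set (Set Ω))) : Prop :=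
  (∀ g ∈ M, ∀ P ∈ E, g • P = P) ∧
  ∃ N : Set (Set Ω) → Subgroup (Equiv.Perm Ω),
    (∀ P ∈ E, N P ≤ M) ∧
    (∀ P Q, P ∈ E → Q ∈ E → P ≠ Q → ∀ x ∈ N P, ∀ y ∈ N Q, Commute x y) ∧
    (⨆ P ∈ E, N P) = M ∧
    (∀ P ∈ E, N P ⊓ (⨆ Q ∈ E \ {P}, N Q) = ⊥) ∧
    (∀ P ∈ E, M ⊓ partKernel P = ⨆ Q ∈ E \ {P}, N Q)

/-- `E` is a blow-up decomposition for `G`: a `G`-invariant Cartesian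
decomposition on which `G` acts transitively, which is `M`-normal for some
transitive normal subgroup `M` of `G` such that `M^Γ = Soc(G^Γ)` for every
`Γ ∈ E`. -/
def IsBlowUpDecomp (G : Subgroup (Equiv.Perm Ω)) (E : Set (Set (Set Ω))) : Prop :=
  IsCartesianDecompSet E ∧ InvariantDec G E ∧ TransitiveOnDec G E ∧
  ∃ M : Subgroup (Equiv.Perm Ω), IsNormalIn M G ∧ IsTransitivePerm M ∧
    IsNormalDecompSet M E ∧ ∀ P ∈ E, component M P = socle (component G P)

end setbased

end QP
namespace QP

section Wreath

variable (K : Type*) [Group K] (ℓ : ℕ)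

/-- The coordinate-permuting action of `Sym(ℓ)` on `K^ℓ`, as automorphisms. -/
def permCoord : Equiv.Perm (Fin ℓ) →* MulAut (Fin ℓ → K) where
  toFun σ :=
    { toFun := fun f => f ∘ σ.symm
      invFun := fun f => f ∘ σ
      left_inv := fun f => by funext i; simp
      right_inv := fun f => by funext i; simp
      map_mul' := fun f g => rfl }
  map_one' := by
    apply MulEquiv.ext; intro f; rfl
  map_mul' := by
    intro σ τ
    apply MulEquiv.ext; intro f; rfl

/-- The wreath product `K wr Sym(ℓ) = K^ℓ ⋊ Sym(ℓ)`. -/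
abbrev WreathProduct := (Fin ℓ → K) ⋊[permCoord K ℓ] Equiv.Perm (Fin ℓ)

variable (Γ : Type*) [MulAction K Γ]

/-- The product action of the wreath product `K wr Sym(ℓ)` on `Γ^ℓ`,
where `K` acts on `Γ`. -/
def prodAction : WreathProduct K ℓ →* Equiv.Perm (Fin ℓ → Γ) where
  toFun w :=
    { toFun := fun v i => w.left i • v (w.right.symm i)
      invFun := fun v i => (w.left (w.right i))⁻¹ • v (w.right i)
      left_inv := fun v => by funext i; simp
      right_inv := fun v => by funext i; simp }
  map_one' := by
    apply Equiv.ext; intro v; funext i; simp <;> rfl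
  map_mul' := by
    intro w₁ w₂
    apply Equiv.ext; intro v; funext i
    simp only [SemidirectProduct.mul_left, SemidirectProduct.mul_right, Pi.mul_apply,
      mul_smul, permCoord, MonoidHom.coe_mk, OneHom.coe_mk, MulEquiv.coe_mk,
      Equiv.coe_fn_mk, Function.comp_apply, Equiv.coe_fn_symm_mk, Equiv.Perm.mul_def,
      Equiv.symm_trans_apply, Equiv.trans_apply]

end Wreath

section Reg

variable (Λ : Type*) [Group Λ]

/-- The right regular representation of a group. -/
def rightReg : Λ →* Equiv.Perm Λ :=
  MonoidHom.mk' (fun g => Equiv.mulRight g⁻¹) (by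
    intro a b; ext x; simp [mul_assoc])

/-- The left regular representation of a group. -/
def leftReg : Λ →* Equiv.Perm Λ :=
  MonoidHom.mk' (fun g => Equiv.mulLeft g) (by
    intro a b; ext x; simp [mul_assoc])

/-- The diagonal embedding of `K` into `K^ℓ`. -/
def constHom (K : Type*) [Group K] (ℓ : ℕ) : K →* (Fin ℓ → K) :=
  MonoidHom.mk' (fun h => fun _ => h) (fun _ _ => rfl)

end Reg

section Sub

variable {Γ : Type*} (H : Subgroup (Equiv.Perm Γ)) (ℓ : ℕ)

/-- The product action of `H wr Sym(ℓ)` on `Γ^ℓ`, for `H ≤ Sym(Γ)`. -/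
def wrAction : WreathProduct ↥H ℓ →* Equiv.Perm (Fin ℓ → Γ) :=
  prodAction ↥H ℓ Γ

/-- The subgroup `A^ℓ` of the base group of `H wr Sym(ℓ)`, for `A ≤ H`. -/
def baseSub (A : Subgroup (Equiv.Perm Γ)) : Subgroup (WreathProduct ↥H ℓ) :=
  Subgroup.map SemidirectProduct.inl (Subgroup.pi Set.univ fun _ => A.subgroupOf H)

/-- The diagonal copy `Hδ` of `H` in the base group of `H wr Sym(ℓ)`. -/
def diagSub : Subgroup (WreathProduct ↥H ℓ) :=
  (SemidirectProduct.inl.comp (constHom ↥H ℓ)).range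

/-- The top group `Sym(ℓ)` of `H wr Sym(ℓ)`. -/
def topSub : Subgroup (WreathProduct ↥H ℓ) :=
  SemidirectProduct.inr.range

end Sub

end QP

namespace QP

section Ex19

variable {Γ : Type*} (H : Subgroup (Equiv.Perm Γ)) (ℓ : ℕ)

/-- The group `G = M₁^ℓ · (Hδ × Sym(ℓ))` of the example, as a permutation
group on `Γ^ℓ` via the product action. -/
noncomputable def exampleG (A : Subgroup (Equiv.Perm Γ)) :
    Subgroup (Equiv.Perm (Fin ℓ → Γ)) :=
  Subgroup.map (wrAction H ℓ) (baseSub H ℓ A ⊔ diagSub H ℓ ⊔ topSub H ℓ)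

/-- The image `A^ℓ` in `Sym(Γ^ℓ)` of the base power of `A ≤ H`. -/
noncomputable def basePower (A : Subgroup (Equiv.Perm Γ)) :
    Subgroup (Equiv.Perm (Fin ℓ → Γ)) :=
  Subgroup.map (wrAction H ℓ) (baseSub H ℓ A)

/-- The diagonal copy `Aδ = {(a,...,a) : a ∈ A}` in `Sym(Γ^ℓ)`, for `A ≤ H`. -/
noncomputable def diagCopy (A : Subgroup (Equiv.Perm Γ)) :
    Subgroup (Equiv.Perm (Fin ℓ → Γ)) :=
  Subgroup.map ((wrAction H ℓ).comp (SemidirectProduct.inl.comp (constHom ↥H ℓ)))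
    (A.subgroupOf H)

end Ex19

end QP


namespace QP

section AuxEx

variable {Γ : Type*}

/-- Coordinatewise action of a tuple of permutations, as a permutation of tuples. -/
def pwHom (ℓ : ℕ) : (Fin ℓ → Equiv.Perm Γ) →* Equiv.Perm (Fin ℓ → Γ) where
  toFun f :=
    { toFun := fun v i => f i (v i)
      invFun := fun v i => (f i)⁻¹ (v i)
      left_inv := fun v => by funext i; simp
      right_inv := fun v => by funext i; simp }
  map_one' := by apply Equiv.ext; intro v; funext i; simp
  map_mul' := by
    intro f g; apply Equiv.ext; intro v; funext i
    simp [Equiv.Perm.mul_apply]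

lemma pwHom_apply (ℓ : ℕ) (f : Fin ℓ → Equiv.Perm Γ) (v : Fin ℓ → Γ) (i : Fin ℓ) :
    pwHom ℓ f v i = f i (v i) := rfl

lemma pwHom_injective (ℓ : ℕ) : Function.Injective (pwHom (Γ := Γ) ℓ) := by
  intro f g h
  funext i
  apply Equiv.ext; intro x
  have := congrArg (fun e : Equiv.Perm (Fin ℓ → Γ) => e (fun _ => x) i) h
  simpa [pwHom_apply] using this

end AuxEx

end QP
namespace QP
section AuxW

variable {Γ : Type*} (H : Subgroup (Equiv.Perm Γ)) (ℓ : ℕ)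

lemma wrAction_inl (p : Fin ℓ → ↥H) :
    wrAction H ℓ (SemidirectProduct.inl p) = pwHom ℓ (fun i => (p i : Equiv.Perm Γ)) := by
  apply Equiv.ext; intro v; funext i
  simp [wrAction, prodAction, pwHom]
  rfl

lemma wrAction_inr (σ : Equiv.Perm (Fin ℓ)) (v : Fin ℓ → Γ) (i : Fin ℓ) :
    wrAction H ℓ (SemidirectProduct.inr σ) v i = v (σ.symm i) := by
  simp [wrAction, prodAction]

lemma top_conj (σ : Equiv.Perm (Fin ℓ)) (g : Fin ℓ → Equiv.Perm Γ) :
    wrAction H ℓ (SemidirectProduct.inr σ) * pwHom ℓ g *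
      (wrAction H ℓ (SemidirectProduct.inr σ))⁻¹ = pwHom ℓ (fun i => g (σ.symm i)) := by
  have hinv : (wrAction H ℓ (SemidirectProduct.inr σ))⁻¹
      = wrAction H ℓ (SemidirectProduct.inr σ⁻¹) := by
    rw [← map_inv, ← map_inv]
  apply Equiv.ext; intro v; funext i
  have h1 : ((wrAction H ℓ) (SemidirectProduct.inr σ))⁻¹ v = fun j => v (σ j) := by
    rw [hinv]; funext j; rw [wrAction_inr]; rfl
  rw [Equiv.Perm.mul_apply, Equiv.Perm.mul_apply, h1, wrAction_inr, pwHom_apply, pwHom_apply]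
  simp

/-- Membership in `basePower`. -/
lemma mem_basePower (A : Subgroup (Equiv.Perm Γ)) (hA : A ≤ H) (g : Equiv.Perm (Fin ℓ → Γ)) :
    g ∈ basePower H ℓ A ↔ ∃ f : Fin ℓ → Equiv.Perm Γ, (∀ i, f i ∈ A) ∧ g = pwHom ℓ f := by
  constructor
  · rintro ⟨w, hw, rfl⟩
    obtain ⟨p, hp, rfl⟩ := hw
    refine ⟨fun i => (p i : Equiv.Perm Γ), fun i => ?_, (wrAction_inl H ℓ p)⟩
    exact (Subgroup.mem_subgroupOf).mp (hp i (Set.mem_univ i))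
  · rintro ⟨f, hf, rfl⟩
    refine ⟨SemidirectProduct.inl (fun i => (⟨f i, hA (hf i)⟩ : ↥H)), ?_, ?_⟩
    · exact ⟨fun i => (⟨f i, hA (hf i)⟩ : ↥H), fun i _ => Subgroup.mem_subgroupOf.mpr (hf i), rfl⟩
    · rw [wrAction_inl]

/-- Membership in `diagCopy`. -/
lemma mem_diagCopy (A : Subgroup (Equiv.Perm Γ)) (hA : A ≤ H) (g : Equiv.Perm (Fin ℓ → Γ)) :
    g ∈ diagCopy H ℓ A ↔ ∃ n ∈ A, g = pwHom ℓ (fun _ => n) := by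
  constructor
  · rintro ⟨x, hx, rfl⟩
    refine ⟨(x : Equiv.Perm Γ), Subgroup.mem_subgroupOf.mp hx, ?_⟩
    show wrAction H ℓ (SemidirectProduct.inl (constHom ↥H ℓ x)) = _
    rw [wrAction_inl]
    rfl
  · rintro ⟨n, hn, rfl⟩
    refine ⟨(⟨n, hA hn⟩ : ↥H), Subgroup.mem_subgroupOf.mpr hn, ?_⟩
    show wrAction H ℓ (SemidirectProduct.inl (constHom ↥H ℓ _)) = _
    rw [wrAction_inl]
    rfl

lemma basePower_le_exampleG (A : Subgroup (Equiv.Perm Γ)) :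
    basePower H ℓ A ≤ exampleG H ℓ A :=
  Subgroup.map_mono (le_sup_left.trans le_sup_left)

lemma diag_mem_exampleG (A : Subgroup (Equiv.Perm Γ)) (h : ↥H) :
    wrAction H ℓ (SemidirectProduct.inl (constHom ↥H ℓ h)) ∈ exampleG H ℓ A := by
  refine ⟨SemidirectProduct.inl (constHom ↥H ℓ h), ?_, rfl⟩
  exact Subgroup.mem_sup_left (Subgroup.mem_sup_right ⟨h, rfl⟩)

lemma top_mem_exampleG (A : Subgroup (Equiv.Perm Γ)) (σ : Equiv.Perm (Fin ℓ)) :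
    wrAction H ℓ (SemidirectProduct.inr σ) ∈ exampleG H ℓ A := by
  refine ⟨SemidirectProduct.inr σ, ?_, rfl⟩
  exact Subgroup.mem_sup_right ⟨σ, rfl⟩

end AuxW
section AuxReg

variable {Λ : Type*} [Group Λ]

lemma rightReg_apply (g x : Λ) : rightReg Λ g x = x * g⁻¹ := rfl

lemma leftReg_apply (g x : Λ) : leftReg Λ g x = g * x := rfl

lemma rightReg_injective : Function.Injective (rightReg Λ) := by
  intro a b h
  have := congrArg (fun e : Equiv.Perm Λ => e 1) h
  simpa [rightReg_apply] using this

lemma leftReg_injective : Function.Injective (leftReg Λ) := by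
  intro a b h
  have := congrArg (fun e : Equiv.Perm Λ => e 1) h
  simpa [leftReg_apply] using this

lemma right_left_commute (a b : Λ) :
    rightReg Λ a * leftReg Λ b = leftReg Λ b * rightReg Λ a := by
  apply Equiv.ext; intro x
  simp [Equiv.Perm.mul_apply, rightReg_apply, leftReg_apply, mul_assoc]

end AuxReg

section AuxGen

variable {X : Type*} [Group X]

lemma mem_normalizer_of_conj {D : Subgroup X} {a : X}
    (h1 : ∀ x ∈ D, a * x * a⁻¹ ∈ D) (h2 : ∀ x ∈ D, a⁻¹ * x * a ∈ D) :
    a ∈ (Subgroup.normalizer (D : Set _)) := by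
  rw [Subgroup.mem_normalizer_iff]
  intro x
  constructor
  · exact h1 x
  · intro hx
    have h3 := h2 _ hx
    have h4 : a⁻¹ * (a * x * a⁻¹) * a = x := by group
    rwa [h4] at h3

lemma exists_ne_one_of_ne_bot {K : Subgroup X} (h : K ≠ ⊥) : ∃ x ∈ K, x ≠ 1 := by
  by_contra hc
  push_neg at hc
  exact h ((Subgroup.eq_bot_iff_forall K).mpr hc)

lemma exists_noncomm {T : Type*} [Group T] [IsSimpleGroup T]
    (hT : ¬ ∀ a b : T, a * b = b * a) {s : T} (hs : s ≠ 1) : ∃ t : T, t * s ≠ s * t := by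
  by_contra hc
  push_neg at hc
  have hsmem : s ∈ Subgroup.center T := Subgroup.mem_center_iff.mpr (fun t => hc t)
  rcases IsSimpleGroup.eq_bot_or_eq_top_of_normal (Subgroup.center T)
    inferInstance with h | h
  · rw [h, Subgroup.mem_bot] at hsmem
    exact hs hsmem
  · apply hT
    intro a b
    have ha : a ∈ Subgroup.center T := by rw [h]; trivial
    exact (Subgroup.mem_center_iff.mp ha b).symm

end AuxGen

end QP

/-- Let T be a non-abelian finite simple group, k ≥ 1, ℓ ≥ 2, and let
H ≤ Hol(T^k) ≤ Sym(T^k) have the two regular minimal normal subgroups M₁ (right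
translations) and N₁ (left translations), both ≅ T^k.  Let
G = M₁^ℓ·(Hδ × Sym(ℓ)) ≤ H wr Sym(ℓ) in product action on Ω = (T^k)^ℓ.  Then M₁^ℓ is
a regular (minimal) normal subgroup of G, N₁δ is a semiregular intransitive minimal
normal subgroup of G, so G is innately transitive but not quasiprimitive. -/
theorem holomorph_diagonal_quotient_example
    {T : Type*} [Group T] [Finite T] [IsSimpleGroup T]
    (hTnonab : ¬ ∀ a b : T, a * b = b * a)
    (k : ℕ) (hk : 1 ≤ k) (ℓ : ℕ) (hℓ : 2 ≤ ℓ)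
    (H M₁ N₁ : Subgroup (Equiv.Perm (Fin k → T)))
    (hM₁ : M₁ = (QP.rightReg (Fin k → T)).range)
    (hN₁ : N₁ = (QP.leftReg (Fin k → T)).range)
    (hM₁H : M₁ ≤ H) (hN₁H : N₁ ≤ H)
    (hM₁min : QP.IsMinimalNormalIn M₁ H)
    (hN₁min : QP.IsMinimalNormalIn N₁ H)
    (hM₁N₁ : M₁ ≠ N₁)
    (honly : ∀ K : Subgroup (Equiv.Perm (Fin k → T)),
      QP.IsMinimalNormalIn K H → K = M₁ ∨ K = N₁) :
    QP.IsNormalIn (QP.basePower H ℓ M₁) (QP.exampleG H ℓ M₁) ∧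
    QP.IsRegularPerm (QP.basePower H ℓ M₁) ∧
    QP.IsMinimalNormalIn (QP.basePower H ℓ M₁) (QP.exampleG H ℓ M₁) ∧
    QP.diagCopy H ℓ N₁ ≤ QP.exampleG H ℓ M₁ ∧
    QP.IsSemiregularPerm (QP.diagCopy H ℓ N₁) ∧
    ¬ QP.IsTransitivePerm (QP.diagCopy H ℓ N₁) ∧
    QP.IsMinimalNormalIn (QP.diagCopy H ℓ N₁) (QP.exampleG H ℓ M₁) ∧
    ¬ QP.IsQuasiprimitivePerm (QP.exampleG H ℓ M₁) := by

  classical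
  -- basic abbreviations
  have hl0 : 0 < ℓ := by omega
  let i0 : Fin ℓ := ⟨0, by omega⟩
  let i1 : Fin ℓ := ⟨1, by omega⟩
  have hi01 : i0 ≠ i1 := by simp [i0, i1, Fin.ext_iff]
  have hM₁normH : ∀ g ∈ H, ∀ n ∈ M₁, g * n * g⁻¹ ∈ M₁ := hM₁min.1.2
  have hN₁normH : ∀ g ∈ H, ∀ n ∈ N₁, g * n * g⁻¹ ∈ N₁ := hN₁min.1.2
  have hcomm : ∀ m ∈ M₁, ∀ n ∈ N₁, m * n = n * m := by
    intro m hm n hn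
    rw [hM₁] at hm; rw [hN₁] at hn
    obtain ⟨a, rfl⟩ := hm; obtain ⟨b, rfl⟩ := hn
    exact QP.right_left_commute a b
  -- membership rewritten
  have hmemB := QP.mem_basePower H ℓ M₁ hM₁H
  have hmemD := QP.mem_diagCopy H ℓ N₁ hN₁H
  have hpwinj := QP.pwHom_injective (Γ := (Fin k → T)) ℓ
  have hconstinj : ∀ x y : Equiv.Perm (Fin k → T),
      (fun _ : Fin ℓ => x) = (fun _ : Fin ℓ => y) → x = y := fun x y h => congrFun h i0
  -- pwHom of const = image of a diagonal element
  have hdiagpw : ∀ h : ↥H, QP.wrAction H ℓ (SemidirectProduct.inl (QP.constHom ↥H ℓ h))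
      = QP.pwHom ℓ (fun _ : Fin ℓ => (h : Equiv.Perm (Fin k → T))) := by
    intro h
    rw [QP.wrAction_inl]
    rfl
  have hdiagG : ∀ h : ↥H, QP.pwHom ℓ (fun _ : Fin ℓ => (h : Equiv.Perm (Fin k → T)))
      ∈ QP.exampleG H ℓ M₁ := by
    intro h
    have := QP.diag_mem_exampleG H ℓ M₁ h
    rwa [hdiagpw h] at this
  -- noncentrality in M₁
  have hM₁noncentral : ∀ w ∈ M₁, w ≠ 1 → ∃ m ∈ M₁, m * w ≠ w * m := by
    intro w hw hwne
    rw [hM₁] at hw; obtain ⟨u, rfl⟩ := hw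
    have hune : u ≠ 1 := by rintro rfl; exact hwne (map_one _)
    obtain ⟨j, hj⟩ : ∃ j, u j ≠ 1 := by
      by_contra hc; push_neg at hc; exact hune (funext fun i => hc i)
    obtain ⟨t, ht⟩ := QP.exists_noncomm hTnonab hj
    refine ⟨QP.rightReg (Fin k → T) (fun _ => t), by rw [hM₁]; exact ⟨_, rfl⟩, ?_⟩
    intro hcm
    rw [← map_mul, ← map_mul] at hcm
    have h2 := QP.rightReg_injective hcm
    exact ht (by simpa using congrFun h2 j)
  -- B is normal in G
  have hBconj : ∀ f : Fin ℓ → Equiv.Perm (Fin k → T), (∀ i, f i ∈ H) →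
      ∀ x ∈ QP.basePower H ℓ M₁,
        QP.pwHom ℓ f * x * (QP.pwHom ℓ f)⁻¹ ∈ QP.basePower H ℓ M₁ := by
    intro f hf x hx
    obtain ⟨m, hm, rfl⟩ := (hmemB x).mp hx
    rw [← map_inv, ← map_mul, ← map_mul]
    exact (hmemB _).mpr ⟨_, fun i => hM₁normH _ (hf i) _ (hm i), rfl⟩
  have hBpwnorm : ∀ f : Fin ℓ → Equiv.Perm (Fin k → T), (∀ i, f i ∈ H) →
      QP.pwHom ℓ f ∈ (Subgroup.normalizer (QP.basePower H ℓ M₁ : Set _)) := by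
    intro f hf
    refine QP.mem_normalizer_of_conj (hBconj f hf) ?_
    intro x hx
    have h2 := hBconj f⁻¹ (fun i => H.inv_mem (hf i)) x hx
    simpa using h2
  have hBtopnorm : ∀ σ : Equiv.Perm (Fin ℓ),
      QP.wrAction H ℓ (SemidirectProduct.inr σ) ∈ (Subgroup.normalizer (QP.basePower H ℓ M₁ : Set _)) := by
    intro σ
    have hc : ∀ τ : Equiv.Perm (Fin ℓ), ∀ x ∈ QP.basePower H ℓ M₁,
        QP.wrAction H ℓ (SemidirectProduct.inr τ) * x *
          (QP.wrAction H ℓ (SemidirectProduct.inr τ))⁻¹ ∈ QP.basePower H ℓ M₁ := by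
      intro τ x hx
      obtain ⟨m, hm, rfl⟩ := (hmemB x).mp hx
      rw [QP.top_conj]
      exact (hmemB _).mpr ⟨_, fun i => hm _, rfl⟩
    refine QP.mem_normalizer_of_conj (hc σ) ?_
    intro x hx
    have h2 := hc σ⁻¹ x hx
    rwa [← map_inv] at h2
  have hGnormB : ∀ g ∈ QP.exampleG H ℓ M₁, g ∈ (Subgroup.normalizer (QP.basePower H ℓ M₁ : Set _)) := by
    rintro g ⟨w, hw, rfl⟩
    have hle : QP.baseSub H ℓ M₁ ⊔ QP.diagSub H ℓ ⊔ QP.topSub H ℓ ≤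
        Subgroup.comap (QP.wrAction H ℓ) (Subgroup.normalizer (QP.basePower H ℓ M₁ : Set _)) := by
      refine sup_le (sup_le ?_ ?_) ?_
      · rintro w ⟨p, hp, rfl⟩
        simp only [Subgroup.mem_comap]
        rw [QP.wrAction_inl]
        exact hBpwnorm _ (fun i => (p i).2)
      · rintro w ⟨h, rfl⟩
        simp only [Subgroup.mem_comap]
        show QP.wrAction H ℓ (SemidirectProduct.inl (QP.constHom ↥H ℓ h)) ∈ _
        rw [hdiagpw h]
        exact hBpwnorm _ (fun i => h.2)
      · rintro w ⟨σ, rfl⟩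
        simp only [Subgroup.mem_comap]
        exact hBtopnorm σ
    exact hle hw
  have hBnormal : QP.IsNormalIn (QP.basePower H ℓ M₁) (QP.exampleG H ℓ M₁) := by
    refine ⟨QP.basePower_le_exampleG H ℓ M₁, ?_⟩
    intro g hg n hn
    exact (Subgroup.mem_normalizer_iff.mp (hGnormB g hg) n).mp hn
  -- B is regular
  have hBreg : QP.IsRegularPerm (QP.basePower H ℓ M₁) := by
    constructor
    · intro a b
      refine ⟨QP.pwHom ℓ (fun i => QP.rightReg (Fin k → T) ((b i)⁻¹ * a i)),
        (hmemB _).mpr ⟨_, fun i => by rw [hM₁]; exact ⟨_, rfl⟩, rfl⟩, ?_⟩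
      funext i
      rw [QP.pwHom_apply, QP.rightReg_apply]
      group
    · intro g hg a ha
      obtain ⟨f, hf, rfl⟩ := (hmemB g).mp hg
      have hf1 : f = 1 := by
        funext i
        show f i = 1
        have hfi := hf i; rw [hM₁] at hfi; obtain ⟨u, hu⟩ := hfi
        have h2 : f i (a i) = a i := congrFun ha i
        rw [← hu, QP.rightReg_apply] at h2
        have hu1 : u = 1 := by
          have h3 := mul_left_cancel (h2.trans (mul_one (a i)).symm)
          simpa using h3
        rw [← hu, hu1, map_one]
      rw [hf1, map_one]
  have hBmin : QP.IsMinimalNormalIn (QP.basePower H ℓ M₁) (QP.exampleG H ℓ M₁) := by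
    refine ⟨hBnormal, ?_, ?_⟩
    · intro hbot
      obtain ⟨m₀, hm₀M, hm₀⟩ := QP.exists_ne_one_of_ne_bot hM₁min.2.1
      have hmem : QP.pwHom ℓ (fun _ : Fin ℓ => m₀) ∈ QP.basePower H ℓ M₁ :=
        (hmemB _).mpr ⟨_, fun _ => hm₀M, rfl⟩
      rw [hbot, Subgroup.mem_bot] at hmem
      have h1 : (fun _ : Fin ℓ => m₀) = (1 : Fin ℓ → Equiv.Perm (Fin k → T)) :=
        hpwinj (by rw [hmem, map_one])
      exact hm₀ (congrFun h1 i0)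
    · intro K hKnorm hKne hKle
      set L := Subgroup.comap (QP.pwHom (Γ := Fin k → T) ℓ) K with hLdef
      have hLmem : ∀ f : Fin ℓ → Equiv.Perm (Fin k → T), f ∈ L ↔ QP.pwHom ℓ f ∈ K :=
        fun f => Iff.rfl
      have hLM : ∀ f ∈ L, ∀ i, f i ∈ M₁ := by
        intro f hf i
        obtain ⟨m, hm, he⟩ := (hmemB _).mp (hKle ((hLmem f).mp hf))
        have h2 : f = m := hpwinj he
        rw [h2]; exact hm i
      have hLbase : ∀ m : Fin ℓ → Equiv.Perm (Fin k → T), (∀ i, m i ∈ M₁) →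
          ∀ f ∈ L, m * f * m⁻¹ ∈ L := by
        intro m hm f hf
        have hg : QP.pwHom ℓ m ∈ QP.exampleG H ℓ M₁ :=
          QP.basePower_le_exampleG H ℓ M₁ ((hmemB _).mpr ⟨m, hm, rfl⟩)
        have h2 := hKnorm.2 _ hg _ ((hLmem f).mp hf)
        rw [hLmem, map_mul, map_mul, map_inv]
        exact h2
      have hLdiag : ∀ h ∈ H, ∀ f ∈ L,
          (fun _ : Fin ℓ => h) * f * (fun _ : Fin ℓ => h)⁻¹ ∈ L := by
        intro h hh f hf
        have h2 := hKnorm.2 _ (hdiagG ⟨h, hh⟩) _ ((hLmem f).mp hf)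
        rw [hLmem, map_mul, map_mul, map_inv]
        exact h2
      have hLtop : ∀ σ : Equiv.Perm (Fin ℓ), ∀ f ∈ L, (fun i => f (σ.symm i)) ∈ L := by
        intro σ f hf
        have h2 := hKnorm.2 _ (QP.top_mem_exampleG H ℓ M₁ σ) _ ((hLmem f).mp hf)
        rw [QP.top_conj] at h2
        exact (hLmem _).mpr h2
      obtain ⟨x, hxK, hxne⟩ := QP.exists_ne_one_of_ne_bot hKne
      obtain ⟨f₀, hf₀M, rfl⟩ := (hmemB x).mp (hKle hxK)
      have hf₀L : f₀ ∈ L := (hLmem f₀).mpr hxK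
      have hf₀ne : f₀ ≠ 1 := fun h => hxne (by rw [h, map_one])
      obtain ⟨iw, hiw⟩ : ∃ i, f₀ i ≠ 1 := by
        by_contra hc; push_neg at hc
        exact hf₀ne (funext fun i => hc i)
      have hQmem : ∀ m ∈ M₁, Pi.mulSingle iw (m * f₀ iw * m⁻¹ * (f₀ iw)⁻¹) ∈ L := by
        intro m hm
        have hmm : ∀ i, (Pi.mulSingle iw m : Fin ℓ → Equiv.Perm (Fin k → T)) i ∈ M₁ := by
          intro i
          rw [Pi.mulSingle_apply]
          split
          · exact hm
          · exact M₁.one_mem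
        have h1 := hLbase _ hmm f₀ hf₀L
        have h2 := L.mul_mem h1 (L.inv_mem hf₀L)
        have h3 : Pi.mulSingle iw (m * f₀ iw * m⁻¹ * (f₀ iw)⁻¹)
            = (Pi.mulSingle iw m * f₀ * (Pi.mulSingle iw m)⁻¹) * f₀⁻¹ := by
          funext j
          by_cases hj : j = iw
          · subst hj
            simp [Pi.mulSingle_apply, mul_assoc]
          · simp [Pi.mulSingle_apply, hj]
        rw [h3]
        exact h2
      have hMsingle : ∀ m ∈ M₁, Pi.mulSingle iw m ∈ L := by
        set Q : Subgroup (Equiv.Perm (Fin k → T)) :=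
          Subgroup.comap
            (MonoidHom.mulSingle (fun _ : Fin ℓ => Equiv.Perm (Fin k → T)) iw) L with hQdef
        have hQm : ∀ x : Equiv.Perm (Fin k → T), x ∈ Q ↔ Pi.mulSingle iw x ∈ L :=
          fun x => Iff.rfl
        have hPnorm : QP.IsNormalIn (Q ⊓ M₁) H := by
          refine ⟨inf_le_right.trans hM₁H, ?_⟩
          intro h hh y hy
          have h1 := hLdiag h hh _ ((hQm y).mp hy.1)
          have h2 : Pi.mulSingle iw (h * y * h⁻¹)
              = (fun _ : Fin ℓ => h) * Pi.mulSingle iw y * (fun _ : Fin ℓ => h)⁻¹ := by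
            funext j
            by_cases hj : j = iw
            · subst hj; simp [Pi.mulSingle_apply]
            · simp [Pi.mulSingle_apply, hj]
          rw [← h2] at h1
          exact ⟨(hQm _).mpr h1, hM₁normH h hh y hy.2⟩
        have hPne : Q ⊓ M₁ ≠ ⊥ := by
          obtain ⟨m, hmM, hmne⟩ := hM₁noncentral (f₀ iw) (hf₀M iw) hiw
          intro hbot
          have hcQ : m * f₀ iw * m⁻¹ * (f₀ iw)⁻¹ ∈ Q ⊓ M₁ := by
            refine ⟨(hQm _).mpr (hQmem m hmM), ?_⟩
            exact M₁.mul_mem (M₁.mul_mem (M₁.mul_mem hmM (hf₀M iw)) (M₁.inv_mem hmM))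
              (M₁.inv_mem (hf₀M iw))
          rw [hbot, Subgroup.mem_bot] at hcQ
          apply hmne
          have h5 : m * f₀ iw * m⁻¹ = f₀ iw := mul_inv_eq_one.mp hcQ
          calc m * f₀ iw = (m * f₀ iw * m⁻¹) * m := by group
          _ = f₀ iw * m := by rw [h5]
        have hPM : Q ⊓ M₁ = M₁ := hM₁min.2.2 _ hPnorm hPne inf_le_right
        intro m hm
        have h6 : m ∈ Q ⊓ M₁ := by rw [hPM]; exact hm
        exact (hQm m).mp h6.1
      have hallsingle : ∀ j : Fin ℓ, ∀ m ∈ M₁, Pi.mulSingle j m ∈ L := by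
        intro j m hm
        have h1 := hLtop (Equiv.swap iw j) _ (hMsingle m hm)
        have h2 : (fun i => (Pi.mulSingle iw m : Fin ℓ → Equiv.Perm (Fin k → T))
              ((Equiv.swap iw j).symm i)) = Pi.mulSingle j m := by
          funext i
          rw [Equiv.symm_swap]
          by_cases hi : i = j
          · subst hi
            rw [Equiv.swap_apply_right]
            simp [Pi.mulSingle_apply]
          · have h7 : Equiv.swap iw j i ≠ iw := by
              intro hc
              exact hi ((Equiv.swap iw j).injective
                (hc.trans (Equiv.swap_apply_right iw j).symm))
            simp [Pi.mulSingle_apply, h7, hi]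
        rw [h2] at h1
        exact h1
      have hind : ∀ s : Finset (Fin ℓ), ∀ f : Fin ℓ → Equiv.Perm (Fin k → T),
          (∀ i, f i ∈ M₁) → (fun i => if i ∈ s then f i else 1) ∈ L := by
        intro s
        induction s using Finset.induction_on with
        | empty =>
          intro f hf
          have h0 : (fun i : Fin ℓ => if i ∈ (∅ : Finset (Fin ℓ)) then f i else 1)
              = (1 : Fin ℓ → Equiv.Perm (Fin k → T)) := by funext i; simp
          rw [h0]; exact L.one_mem
        | @insert a s ha ih =>
          intro f hf
          have h1 := L.mul_mem (hallsingle a (f a) (hf a)) (ih f hf)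
          have h2 : (fun i => if i ∈ insert a s then f i else 1)
              = Pi.mulSingle a (f a) * (fun i => if i ∈ s then f i else 1) := by
            funext i
            by_cases hi : i = a
            · subst hi
              simp [Pi.mulSingle_apply, ha]
            · by_cases his : i ∈ s <;> simp [Pi.mulSingle_apply, hi, his]
          rw [h2]
          exact h1
      refine le_antisymm hKle ?_
      intro x hx
      obtain ⟨f, hf, rfl⟩ := (hmemB x).mp hx
      have h1 := hind Finset.univ f hf
      have h2 : (fun i : Fin ℓ => if i ∈ (Finset.univ : Finset (Fin ℓ)) then f i else 1)
          = f := by funext i; simp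
      rw [h2] at h1
      exact (hLmem f).mp h1
  -- D ≤ G
  have hDleG : QP.diagCopy H ℓ N₁ ≤ QP.exampleG H ℓ M₁ := by
    intro x hx
    obtain ⟨n, hn, rfl⟩ := (hmemD x).mp hx
    exact hdiagG ⟨n, hN₁H hn⟩
  -- D semiregular
  have hDsemi : QP.IsSemiregularPerm (QP.diagCopy H ℓ N₁) := by
    intro g hg a ha
    obtain ⟨n, hn, rfl⟩ := (hmemD g).mp hg
    rw [hN₁] at hn; obtain ⟨u, rfl⟩ := hn
    have h2 := congrFun ha i0
    rw [QP.pwHom_apply] at h2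
    have h2' : u * a i0 = a i0 := h2
    have hu : u = 1 := mul_right_cancel (h2'.trans (one_mul (a i0)).symm)
    have h4 : (fun _ : Fin ℓ => QP.leftReg (Fin k → T) u)
        = (1 : Fin ℓ → Equiv.Perm (Fin k → T)) := by
      funext i; rw [hu, map_one]; rfl
    rw [h4, map_one]
  -- D not transitive
  obtain ⟨t, ht⟩ : ∃ t : T, t ≠ 1 := exists_ne 1
  have hj0 : 0 < k := by omega
  have hDnotrans : ¬ QP.IsTransitivePerm (QP.diagCopy H ℓ N₁) := by
    intro htr
    obtain ⟨g, hg, hgab⟩ := htr (fun _ => (1 : Fin k → T))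
      (fun i => if i = i0 then (fun _ => t) else 1)
    obtain ⟨n, hn, rfl⟩ := (hmemD g).mp hg
    have e0 := congrFun hgab i0
    have e1 := congrFun hgab i1
    rw [QP.pwHom_apply, if_pos rfl] at e0
    have hne10 : i1 ≠ i0 := fun h => hi01 h.symm
    rw [QP.pwHom_apply, if_neg hne10] at e1
    have e2 : (fun _ : Fin k => t) = (1 : Fin k → T) := by
      rw [← e0]
      exact e1
    exact ht (congrFun e2 ⟨0, hj0⟩)
  -- D normal in G
  have hDconjbase : ∀ f : Fin ℓ → Equiv.Perm (Fin k → T), (∀ i, f i ∈ M₁) →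
      ∀ x ∈ QP.diagCopy H ℓ N₁,
        QP.pwHom ℓ f * x * (QP.pwHom ℓ f)⁻¹ ∈ QP.diagCopy H ℓ N₁ := by
    intro f hf x hx
    obtain ⟨n, hn, rfl⟩ := (hmemD x).mp hx
    rw [← map_inv, ← map_mul, ← map_mul]
    have he : (f * (fun _ : Fin ℓ => n) * f⁻¹) = (fun _ : Fin ℓ => n) := by
      funext i
      show f i * n * (f i)⁻¹ = n
      rw [hcomm (f i) (hf i) n hn]
      exact mul_inv_cancel_right n (f i)
    rw [he]
    exact (hmemD _).mpr ⟨n, hn, rfl⟩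
  have hDconjdiag : ∀ h ∈ H, ∀ x ∈ QP.diagCopy H ℓ N₁,
      QP.pwHom ℓ (fun _ : Fin ℓ => h) * x * (QP.pwHom ℓ (fun _ : Fin ℓ => h))⁻¹
        ∈ QP.diagCopy H ℓ N₁ := by
    intro h hh x hx
    obtain ⟨n, hn, rfl⟩ := (hmemD x).mp hx
    rw [← map_inv, ← map_mul, ← map_mul]
    have he : ((fun _ : Fin ℓ => h) * (fun _ : Fin ℓ => n) * (fun _ : Fin ℓ => h)⁻¹)
        = (fun _ : Fin ℓ => h * n * h⁻¹) := rfl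
    rw [he]
    exact (hmemD _).mpr ⟨h * n * h⁻¹, hN₁normH h hh n hn, rfl⟩
  have hDconjtop : ∀ σ : Equiv.Perm (Fin ℓ), ∀ x ∈ QP.diagCopy H ℓ N₁,
      QP.wrAction H ℓ (SemidirectProduct.inr σ) * x *
        (QP.wrAction H ℓ (SemidirectProduct.inr σ))⁻¹ ∈ QP.diagCopy H ℓ N₁ := by
    intro σ x hx
    obtain ⟨n, hn, rfl⟩ := (hmemD x).mp hx
    rw [QP.top_conj]
    exact (hmemD _).mpr ⟨n, hn, rfl⟩
  have hGnormD : ∀ g ∈ QP.exampleG H ℓ M₁, g ∈ (Subgroup.normalizer (QP.diagCopy H ℓ N₁ : Set _)) := by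
    rintro g ⟨w, hw, rfl⟩
    have hle : QP.baseSub H ℓ M₁ ⊔ QP.diagSub H ℓ ⊔ QP.topSub H ℓ ≤
        Subgroup.comap (QP.wrAction H ℓ) (Subgroup.normalizer (QP.diagCopy H ℓ N₁ : Set _)) := by
      refine sup_le (sup_le ?_ ?_) ?_
      · rintro w ⟨p, hp, rfl⟩
        simp only [Subgroup.mem_comap]
        rw [QP.wrAction_inl]
        refine QP.mem_normalizer_of_conj
          (hDconjbase _ (fun i => Subgroup.mem_subgroupOf.mp (hp i (Set.mem_univ i)))) ?_
        intro x hx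
        have h2 := hDconjbase (fun i => ((p i : Equiv.Perm (Fin k → T)))⁻¹)
          (fun i => M₁.inv_mem (Subgroup.mem_subgroupOf.mp (hp i (Set.mem_univ i)))) x hx
        have he : (fun i => ((p i : Equiv.Perm (Fin k → T)))⁻¹)
            = (fun i => (p i : Equiv.Perm (Fin k → T)))⁻¹ := rfl
        rw [he, map_inv] at h2
        simpa using h2
      · rintro w ⟨h, rfl⟩
        simp only [Subgroup.mem_comap]
        show QP.wrAction H ℓ (SemidirectProduct.inl (QP.constHom ↥H ℓ h)) ∈ _
        rw [hdiagpw h]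
        refine QP.mem_normalizer_of_conj (hDconjdiag _ h.2) ?_
        intro x hx
        have h2 := hDconjdiag _ (H.inv_mem h.2) x hx
        have he : (fun _ : Fin ℓ => ((h : Equiv.Perm (Fin k → T)))⁻¹)
            = (fun _ : Fin ℓ => (h : Equiv.Perm (Fin k → T)))⁻¹ := rfl
        rw [he, map_inv] at h2
        simpa using h2
      · rintro w ⟨σ, rfl⟩
        simp only [Subgroup.mem_comap]
        refine QP.mem_normalizer_of_conj (hDconjtop σ) ?_
        intro x hx
        have h2 := hDconjtop σ⁻¹ x hx
        rwa [← map_inv] at h2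
    exact hle hw
  have hDnormal : QP.IsNormalIn (QP.diagCopy H ℓ N₁) (QP.exampleG H ℓ M₁) := by
    refine ⟨hDleG, ?_⟩
    intro g hg n hn
    exact (Subgroup.mem_normalizer_iff.mp (hGnormD g hg) n).mp hn
  -- D nontrivial
  have hDne : QP.diagCopy H ℓ N₁ ≠ ⊥ := by
    obtain ⟨n₀, hn₀N, hn₀⟩ := QP.exists_ne_one_of_ne_bot hN₁min.2.1
    intro hbot
    have hmem : QP.pwHom ℓ (fun _ : Fin ℓ => n₀) ∈ QP.diagCopy H ℓ N₁ :=
      (hmemD _).mpr ⟨n₀, hn₀N, rfl⟩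
    rw [hbot, Subgroup.mem_bot] at hmem
    have h1 : QP.pwHom ℓ (fun _ : Fin ℓ => n₀) = QP.pwHom ℓ 1 := by rw [map_one, hmem]
    exact hn₀ (congrFun (hpwinj h1) i0)
  -- D minimal normal
  have hDmin : QP.IsMinimalNormalIn (QP.diagCopy H ℓ N₁) (QP.exampleG H ℓ M₁) := by
    refine ⟨hDnormal, hDne, ?_⟩
    intro K hKnorm hKne hKle
    set R := Subgroup.comap ((QP.pwHom (Γ := Fin k → T) ℓ).comp
      (QP.constHom (Equiv.Perm (Fin k → T)) ℓ)) K with hRdef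
    have hRmem : ∀ n : Equiv.Perm (Fin k → T),
        n ∈ R ↔ QP.pwHom ℓ (fun _ : Fin ℓ => n) ∈ K := fun n => Iff.rfl
    have hRN : R ≤ N₁ := by
      intro n hn
      obtain ⟨n', hn', he⟩ := (hmemD _).mp (hKle ((hRmem n).mp hn))
      have h2 : n = n' := congrFun (hpwinj he) i0
      rw [h2]; exact hn'
    have hRnorm : QP.IsNormalIn R H := by
      refine ⟨hRN.trans hN₁H, ?_⟩
      intro h hh n hn
      have h2 := hKnorm.2 _ (hdiagG ⟨h, hh⟩) _ ((hRmem n).mp hn)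
      have he : QP.pwHom ℓ (fun _ : Fin ℓ => h * n * h⁻¹)
          = QP.pwHom ℓ (fun _ : Fin ℓ => h) * QP.pwHom ℓ (fun _ : Fin ℓ => n) *
            (QP.pwHom ℓ (fun _ : Fin ℓ => h))⁻¹ := by
        rw [← map_inv, ← map_mul, ← map_mul]
        rfl
      have h3 : QP.pwHom ℓ (fun _ : Fin ℓ => h * n * h⁻¹) ∈ K := by rw [he]; exact h2
      exact (hRmem _).mpr h3
    have hRne : R ≠ ⊥ := by
      obtain ⟨x, hxK, hxne⟩ := QP.exists_ne_one_of_ne_bot hKne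
      obtain ⟨n, hn, rfl⟩ := (hmemD x).mp (hKle hxK)
      intro hbot
      have h5 : n ∈ R := (hRmem n).mpr hxK
      rw [hbot, Subgroup.mem_bot] at h5
      apply hxne
      rw [h5]
      exact map_one _
    have hRN₁ : R = N₁ := hN₁min.2.2 R hRnorm hRne hRN
    refine le_antisymm hKle ?_
    intro x hx
    obtain ⟨n, hn, rfl⟩ := (hmemD x).mp hx
    rw [← hRN₁] at hn
    exact (hRmem n).mp hn
  -- conclusion
  have hnotqp : ¬ QP.IsQuasiprimitivePerm (QP.exampleG H ℓ M₁) := by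
    intro hqp
    exact hDnotrans (hqp.2 _ hDnormal hDne)
  exact ⟨hBnormal, hBreg, hBmin, hDleG, hDsemi, hDnotrans, hDmin, hnotqp⟩
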